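/- Let n ≥ 1, let A, B be n×n complex matrices, let m : ℂ → ℂ and μ ∈ ℂ with m(p+μ) ≠ 0 and m(p+μ−1) ≠ 0 for every natural number p, and set r(p) := m(p+μ)/m(p+μ−1). Assume B·s₀ = r(0)·s₀ and that there exist M > 0 and θ < 1 with |m(p+μ−1)/m(p+μ)| ≤ M and ‖B‖·|m(p+μ−1)/m(p+μ)| ≤ θ for all p ≥ 1, where ‖·‖ is the operator norm on n×n complex matrices induced by the Euclidean norm on ℂⁿ. Then for every p ≥ 1 the matrix r(p)·I − B is invertible with ‖(r(p)·I − B)⁻¹‖ ≤ M/(1−θ), the vectors s_p := (r(p)·I − B)⁻¹·A·s_{p−1} (p ≥ 1) satisfy ‖s_p‖ ≤ ‖s₀‖·(‖A‖·M/(1−θ))^p, and there exists ρ > 0 such that Σ_{p≥0} ‖s_p‖·ρ^p is summable; in particular the Floquet solution Σ_{p≥0} s_p z^{p+μ} of z∂_m y = (zA+B)y is convergent near the origin. -/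

import Mathlib

/-- The Euclidean norm of a vector in `ℂⁿ`. -/
noncomputable def vecNorm {n : ℕ} (v : Fin n → ℂ) : ℝ :=
  ‖(WithLp.equiv 2 (Fin n → ℂ)).symm v‖

/-- The operator norm on `n×n` complex matrices induced by the Euclidean norm on `ℂⁿ`. -/
noncomputable def matNorm {n : ℕ} (M : Matrix (Fin n) (Fin n) ℂ) : ℝ :=
  ‖Matrix.toEuclideanCLM (𝕜 := ℂ) (n := Fin n) M‖

lemma vecNorm_nonneg {n : ℕ} (v : Fin n → ℂ) : 0 ≤ vecNorm v := norm_nonneg _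

lemma matNorm_nonneg {n : ℕ} (M : Matrix (Fin n) (Fin n) ℂ) : 0 ≤ matNorm M := norm_nonneg _

lemma mulVec_vecNorm_le {n : ℕ} (M : Matrix (Fin n) (Fin n) ℂ) (v : Fin n → ℂ) :
    vecNorm (M.mulVec v) ≤ matNorm M * vecNorm v := by
  show ‖(WithLp.equiv 2 (Fin n → ℂ)).symm (M.mulVec v)‖ ≤ _
  rw [show (WithLp.equiv 2 (Fin n → ℂ)).symm (M.mulVec v) = Matrix.toEuclideanCLM (𝕜 := ℂ) M ((WithLp.equiv 2 (Fin n → ℂ)).symm v) from rfl]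
  exact (Matrix.toEuclideanCLM (𝕜 := ℂ) M).le_opNorm _

set_option maxHeartbeats 2000000 in
set_option synthInstance.maxHeartbeats 1000000 in
/-- If `|m(p+μ−1)/m(p+μ)| ≤ M` and `‖B‖·|m(p+μ−1)/m(p+μ)| ≤ θ < 1` for all
`p ≥ 1`, then each `r(p)·I − B` is invertible with `‖(r(p)·I − B)⁻¹‖ ≤ M/(1−θ)` (Neumann
series), the Floquet coefficients satisfy `‖s_p‖ ≤ ‖s₀‖·(‖A‖·M/(1−θ))^p`, and there is
`ρ > 0` with `Σ ‖s_p‖·ρ^p` summable, so the Floquet solution converges near the origin. -/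
theorem stmt3 (n : ℕ) (hn : 1 ≤ n) (A B : Matrix (Fin n) (Fin n) ℂ)
    (m : ℂ → ℂ) (μ : ℂ)
    (hm0 : ∀ p : ℕ, m ((p : ℂ) + μ) ≠ 0) (hm1 : ∀ p : ℕ, m ((p : ℂ) + μ - 1) ≠ 0)
    (r : ℕ → ℂ) (hr : ∀ p : ℕ, r p = m ((p : ℂ) + μ) / m ((p : ℂ) + μ - 1))
    (s : ℕ → Fin n → ℂ)
    (hs0 : B.mulVec (s 0) = r 0 • s 0)
    (M θ : ℝ) (hM : 0 < M) (hθ : θ < 1)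
    (hb1 : ∀ p : ℕ, 1 ≤ p → ‖m ((p : ℂ) + μ - 1) / m ((p : ℂ) + μ)‖ ≤ M)
    (hb2 : ∀ p : ℕ, 1 ≤ p →
      matNorm B * ‖m ((p : ℂ) + μ - 1) / m ((p : ℂ) + μ)‖ ≤ θ)
    (hs : ∀ p : ℕ, 1 ≤ p →
      s p = (r p • (1 : Matrix (Fin n) (Fin n) ℂ) - B)⁻¹.mulVec (A.mulVec (s (p - 1)))) :
    (∀ p : ℕ, 1 ≤ p → IsUnit (r p • (1 : Matrix (Fin n) (Fin n) ℂ) - B) ∧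
      matNorm ((r p • (1 : Matrix (Fin n) (Fin n) ℂ) - B)⁻¹) ≤ M / (1 - θ)) ∧
    (∀ p : ℕ, vecNorm (s p) ≤ vecNorm (s 0) * (matNorm A * M / (1 - θ)) ^ p) ∧
    ∃ ρ : ℝ, 0 < ρ ∧ Summable (fun p : ℕ => vecNorm (s p) * ρ ^ p) := by
  classical
  haveI : Nonempty (Fin n) := ⟨⟨0, hn⟩⟩
  haveI : Nontrivial (EuclideanSpace ℂ (Fin n)) := inferInstance
  have h1θ : 0 < 1 - θ := by linarith
  have hθ0 : 0 ≤ θ :=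
    le_trans (mul_nonneg (matNorm_nonneg B) (norm_nonneg _)) (hb2 1 le_rfl)
  set f := Matrix.toEuclideanCLM (𝕜 := ℂ) (n := Fin n) with hf
  have key : ∀ p : ℕ, 1 ≤ p →
      IsUnit (r p • (1 : Matrix (Fin n) (Fin n) ℂ) - B) ∧
      matNorm ((r p • (1 : Matrix (Fin n) (Fin n) ℂ) - B)⁻¹) ≤ M / (1 - θ) := by
    intro p hp
    have hc : r p ≠ 0 := by rw [hr]; exact div_ne_zero (hm0 p) (hm1 p)
    have hcinv : (r p)⁻¹ = m ((p:ℂ)+μ-1) / m ((p:ℂ)+μ) := by rw [hr, inv_div]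
    have habs : ‖(r p)⁻¹‖ ≤ M := by
      rw [hcinv]; exact hb1 p hp
    set B' := f B with hB'
    set t : EuclideanSpace ℂ (Fin n) →L[ℂ] EuclideanSpace ℂ (Fin n) := (r p)⁻¹ • B' with ht
    have hnt : ‖t‖ ≤ θ := by
      refine le_trans (ContinuousLinearMap.opNorm_smul_le ((r p)⁻¹) B') ?_
      calc ‖(r p)⁻¹‖ * ‖B'‖ = matNorm B * ‖(r p)⁻¹‖ := by
            exact mul_comm _ _
        _ ≤ θ := by rw [hcinv]; exact hb2 p hp
    have hnt1 : ‖t‖ < 1 := lt_of_le_of_lt hnt hθ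
    set u0 := Units.oneSub t hnt1 with hu0
    set V : EuclideanSpace ℂ (Fin n) →L[ℂ] EuclideanSpace ℂ (Fin n) := ↑u0⁻¹ with hV
    have hVnorm : ‖V‖ ≤ (1 - θ)⁻¹ := by
      have hVsum : V = ∑' k : ℕ, t ^ k := rfl
      rw [hVsum]
      refine tsum_of_norm_bounded (hasSum_geometric_of_lt_one hθ0 hθ) fun k => ?_
      calc ‖t ^ k‖ ≤ ‖t‖ ^ k := norm_pow_le t k
        _ ≤ θ ^ k := pow_le_pow_left₀ (norm_nonneg _) hnt k
    have hfx : f (r p • (1 : Matrix (Fin n) (Fin n) ℂ) - B) =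
        r p • (1 : EuclideanSpace ℂ (Fin n) →L[ℂ] EuclideanSpace ℂ (Fin n)) - B' := by
      rw [map_sub, map_smul, map_one]
    set W := f.symm ((r p)⁻¹ • V) with hW
    have hfW : f W = (r p)⁻¹ • V := f.apply_symm_apply _
    have hct : r p • ((1 : EuclideanSpace ℂ (Fin n) →L[ℂ] EuclideanSpace ℂ (Fin n)) - t) =
        r p • 1 - B' := by
      rw [smul_sub, ht, smul_smul, mul_inv_cancel₀ hc, one_smul]
    have hmul1 : (r p • (1 : EuclideanSpace ℂ (Fin n) →L[ℂ] EuclideanSpace ℂ (Fin n)) - B') *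
        ((r p)⁻¹ • V) = 1 := by
      rw [← hct, smul_mul_smul_comm, mul_inv_cancel₀ hc, one_smul]
      exact u0.mul_inv
    have hmul2 : ((r p)⁻¹ • V) * (r p • (1 : EuclideanSpace ℂ (Fin n) →L[ℂ]
        EuclideanSpace ℂ (Fin n)) - B') = 1 := by
      rw [← hct, smul_mul_smul_comm, inv_mul_cancel₀ hc, one_smul]
      exact u0.inv_mul
    have hmulM1 : (r p • (1 : Matrix (Fin n) (Fin n) ℂ) - B) * W = 1 := by
      refine f.injective ?_
      calc f ((r p • (1 : Matrix (Fin n) (Fin n) ℂ) - B) * W)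
          = f (r p • (1 : Matrix (Fin n) (Fin n) ℂ) - B) * f W := map_mul f _ _
        _ = (r p • 1 - B') * ((r p)⁻¹ • V) := by rw [hfx, hfW]
        _ = 1 := hmul1
        _ = f 1 := (map_one f).symm
    have hmulM2 : W * (r p • (1 : Matrix (Fin n) (Fin n) ℂ) - B) = 1 := by
      refine f.injective ?_
      calc f (W * (r p • (1 : Matrix (Fin n) (Fin n) ℂ) - B))
          = f W * f (r p • (1 : Matrix (Fin n) (Fin n) ℂ) - B) := map_mul f _ _
        _ = ((r p)⁻¹ • V) * (r p • 1 - B') := by rw [hfx, hfW]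
        _ = 1 := hmul2
        _ = f 1 := (map_one f).symm
    have hinv : (r p • (1 : Matrix (Fin n) (Fin n) ℂ) - B)⁻¹ = W :=
      Matrix.inv_eq_right_inv hmulM1
    refine ⟨⟨⟨_, _, hmulM1, hmulM2⟩, rfl⟩, ?_⟩
    rw [hinv]
    have hnormW : matNorm W = ‖(r p)⁻¹ • V‖ := by
      show ‖f W‖ = _
      rw [hfW]
    rw [hnormW, div_eq_mul_inv]
    refine le_trans (ContinuousLinearMap.opNorm_smul_le ((r p)⁻¹) V) ?_
    exact mul_le_mul habs hVnorm (norm_nonneg _) hM.le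
  refine ⟨key, ?_⟩
  set K : ℝ := matNorm A * M / (1 - θ) with hK
  have hK0 : 0 ≤ K :=
    div_nonneg (mul_nonneg (matNorm_nonneg A) hM.le) h1θ.le
  have bound2 : ∀ p : ℕ, vecNorm (s p) ≤ vecNorm (s 0) * K ^ p := by
    intro p
    induction p with
    | zero => simp
    | succ q ih =>
      have hq1 : 1 ≤ q + 1 := Nat.succ_le_succ (Nat.zero_le q)
      obtain ⟨_, hinv⟩ := key (q + 1) hq1
      have h1 : vecNorm (s (q + 1)) ≤
          matNorm ((r (q+1) • (1 : Matrix (Fin n) (Fin n) ℂ) - B)⁻¹) *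
            (matNorm A * vecNorm (s q)) := by
        rw [hs (q + 1) hq1]
        simp only [Nat.add_sub_cancel]
        calc vecNorm ((r (q+1) • (1 : Matrix (Fin n) (Fin n) ℂ) - B)⁻¹.mulVec
              (A.mulVec (s q)))
            ≤ matNorm ((r (q+1) • (1 : Matrix (Fin n) (Fin n) ℂ) - B)⁻¹) *
              vecNorm (A.mulVec (s q)) := mulVec_vecNorm_le _ _
          _ ≤ _ :=
              mul_le_mul_of_nonneg_left (mulVec_vecNorm_le _ _) (matNorm_nonneg _)
      calc vecNorm (s (q + 1)) ≤ matNorm ((r (q+1) • (1 : Matrix (Fin n) (Fin n) ℂ) - B)⁻¹) *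
            (matNorm A * vecNorm (s q)) := h1
        _ ≤ (M / (1 - θ)) * (matNorm A * (vecNorm (s 0) * K ^ q)) :=
            mul_le_mul hinv
              (mul_le_mul_of_nonneg_left ih (matNorm_nonneg A))
              (mul_nonneg (matNorm_nonneg A) (vecNorm_nonneg _))
              (div_nonneg hM.le h1θ.le)
        _ = vecNorm (s 0) * K ^ (q + 1) := by rw [hK, pow_succ]; ring
  refine ⟨bound2, ?_⟩
  refine ⟨(2 * (K + 1))⁻¹, by positivity, ?_⟩
  have hKρ0 : 0 ≤ K * (2 * (K + 1))⁻¹ := by positivity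
  have hKρ1 : K * (2 * (K + 1))⁻¹ < 1 := by
    rw [← div_eq_mul_inv, div_lt_one (by positivity)]
    linarith
  apply Summable.of_nonneg_of_le
    (fun p => mul_nonneg (vecNorm_nonneg _) (pow_nonneg (by positivity) p))
    (fun p => ?_) (((summable_geometric_of_lt_one hKρ0 hKρ1)).mul_left (vecNorm (s 0)))
  calc vecNorm (s p) * ((2 * (K + 1))⁻¹) ^ p
      ≤ (vecNorm (s 0) * K ^ p) * ((2 * (K + 1))⁻¹) ^ p :=
        mul_le_mul_of_nonneg_right (bound2 p) (pow_nonneg (by positivity) p)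
    _ = vecNorm (s 0) * (K * (2 * (K + 1))⁻¹) ^ p := by rw [mul_pow]; ring
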